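/- Fix z ∈ [0,1]. For every reference point ỹ ∈ (0,1) and every y ∈ [0,1], the first-order (tangent-line) expansion of G₋ at ỹ is a valid lower bound: G₋(y, z) ≥ G₋(ỹ, z) + G₋′(ỹ, z)·(y − ỹ). (Linearized lower Cauchy–Schwarz constraint.) -/

import Mathlib

noncomputable def gMinus (y z : ℝ) : ℝ :=
  y + (1 - z) * (1 - 2 * y) - 2 * Real.sqrt (z * (1 - z) * y * (1 - y))

noncomputable def gMinus' (y z : ℝ) : ℝ :=
  -1 + 2 * z - (1 - 2 * y) * Real.sqrt (z * (1 - z) / (y * (1 - y)))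

noncomputable def GMinus (y z : ℝ) : ℝ :=
  if y > 1 - z then gMinus y z else 0

noncomputable def GMinus' (y z : ℝ) : ℝ :=
  if y > 1 - z then gMinus' y z else 0

set_option maxHeartbeats 1000000 in
theorem linearized_lower_cs (z : ℝ) (hz : z ∈ Set.Icc (0 : ℝ) 1)
    (yt : ℝ) (hyt : yt ∈ Set.Ioo (0 : ℝ) 1)
    (y : ℝ) (hy : y ∈ Set.Icc (0 : ℝ) 1) :
    GMinus yt z + GMinus' yt z * (y - yt) ≤ GMinus y z := by
  obtain ⟨hz0, hz1⟩ := hz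
  obtain ⟨hyt0, hyt1⟩ := hyt
  obtain ⟨hy0, hy1⟩ := hy
  set a := Real.sqrt (y * z) with ha_def
  set b := Real.sqrt ((1 - y) * (1 - z)) with hb_def
  set c := Real.sqrt (yt * z) with hc_def
  set d := Real.sqrt ((1 - yt) * (1 - z)) with hd_def
  have ha0 : 0 ≤ a := Real.sqrt_nonneg _
  have hb0 : 0 ≤ b := Real.sqrt_nonneg _
  have hc0 : 0 ≤ c := Real.sqrt_nonneg _
  have hd0 : 0 ≤ d := Real.sqrt_nonneg _
  have ha2 : a ^ 2 = y * z := Real.sq_sqrt (mul_nonneg hy0 hz0)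
  have hb2 : b ^ 2 = (1 - y) * (1 - z) := Real.sq_sqrt (mul_nonneg (by linarith) (by linarith))
  have hc2 : c ^ 2 = yt * z := Real.sq_sqrt (mul_nonneg hyt0.le hz0)
  have hd2 : d ^ 2 = (1 - yt) * (1 - z) := Real.sq_sqrt (mul_nonneg (by linarith) (by linarith))
  have hab : Real.sqrt (z * (1 - z) * y * (1 - y)) = a * b := by
    rw [ha_def, hb_def, ← Real.sqrt_mul (mul_nonneg (by linarith) (by linarith))]
    ring_nf
  have hcd : Real.sqrt (z * (1 - z) * yt * (1 - yt)) = c * d := by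
    rw [hc_def, hd_def, ← Real.sqrt_mul (mul_nonneg (by linarith) (by linarith))]
    ring_nf
  have hval : gMinus y z = (a - b) ^ 2 := by
    rw [gMinus, hab]; linear_combination (-1 : ℝ) * ha2 - hb2
  have hvalt : gMinus yt z = (c - d) ^ 2 := by
    rw [gMinus, hcd]; linear_combination (-1 : ℝ) * hc2 - hd2
  have hm0 : (0 : ℝ) < yt * (1 - yt) := mul_pos hyt0 (by linarith)
  by_cases hcase : yt > 1 - z
  · -- tangent point in positive region
    rcases lt_or_eq_of_le hz1 with hz1' | hz1'
    · -- z < 1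
      have hz0' : 0 < z := by linarith
      have hc0' : 0 < c := Real.sqrt_pos.mpr (mul_pos hyt0 hz0')
      have hd0' : 0 < d := Real.sqrt_pos.mpr (mul_pos (by linarith) (by linarith))
      have hcd0 : 0 < c * d := mul_pos hc0' hd0'
      have hsd : Real.sqrt (z * (1 - z) / (yt * (1 - yt))) = c * d / (yt * (1 - yt)) := by
        have h1 : z * (1 - z) / (yt * (1 - yt)) = (c * d / (yt * (1 - yt))) ^ 2 := by
          rw [div_pow, mul_pow, hc2, hd2]
          field_simp
        rw [h1, Real.sqrt_sq (div_nonneg (mul_nonneg hc0 hd0) hm0.le)]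
      have hgp : gMinus' yt z * (yt * (1 - yt)) =
          (-1 + 2 * z) * (yt * (1 - yt)) - (1 - 2 * yt) * (c * d) := by
        rw [gMinus', hsd]
        field_simp
      have key2 : c * d * (((a - b) ^ 2 - (c - d) ^ 2) * (yt * (1 - yt)) -
          ((-1 + 2 * z) * (yt * (1 - yt)) - (1 - 2 * yt) * (c * d)) * (y - yt)) =
          (yt * (1 - yt)) * (a * d - c * b) ^ 2 := by
        linear_combination
          ((2 * (yt * (1 - yt)) + (1 - 2 * yt) * (y - yt)) * c ^ 2 - (yt * (1 - yt)) * a ^ 2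
            - c * d * (yt * (1 - yt))) * hd2 +
          ((2 * (yt * (1 - yt)) + (1 - 2 * yt) * (y - yt)) * (1 - yt) * (1 - z)
            - (yt * (1 - yt)) * (1 - y) * (1 - z) - c * d * (yt * (1 - yt))) * hc2 +
          (-(yt * (1 - yt)) * (1 - yt) * (1 - z) + c * d * (yt * (1 - yt))) * ha2 +
          (-(yt * (1 - yt)) * c ^ 2 + c * d * (yt * (1 - yt))) * hb2
      have h5 : gMinus' yt z * (y - yt) * (yt * (1 - yt)) =
          ((-1 + 2 * z) * (yt * (1 - yt)) - (1 - 2 * yt) * (c * d)) * (y - yt) := by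
        rw [mul_right_comm, hgp]
      have expand : ((c - d) ^ 2 + gMinus' yt z * (y - yt)) * (yt * (1 - yt)) =
          (c - d) ^ 2 * (yt * (1 - yt)) +
          ((-1 + 2 * z) * (yt * (1 - yt)) - (1 - 2 * yt) * (c * d)) * (y - yt) := by
        rw [add_mul, h5]
      rw [GMinus, GMinus', if_pos hcase, if_pos hcase, hvalt]
      by_cases hycase : y > 1 - z
      · rw [GMinus, if_pos hycase, hval]
        have goal' : 0 ≤ ((a - b) ^ 2 - (c - d) ^ 2) * (yt * (1 - yt)) -
            ((-1 + 2 * z) * (yt * (1 - yt)) - (1 - 2 * yt) * (c * d)) * (y - yt) := by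
          by_contra hlt
          push_neg at hlt
          have h6 := mul_neg_of_pos_of_neg hcd0 hlt
          have h7 := mul_nonneg hm0.le (sq_nonneg (a * d - c * b))
          rw [key2] at h6
          linarith
        apply le_of_mul_le_mul_right _ hm0
        rw [expand]
        linarith [goal']
      · rw [GMinus, if_neg hycase]
        push_neg at hycase
        have hba : a ≤ b := by
          rw [ha_def, hb_def]
          exact Real.sqrt_le_sqrt (by nlinarith)
        have hdc : d ≤ c := by
          rw [hc_def, hd_def]
          exact Real.sqrt_le_sqrt (by nlinarith)
        have t1 : 0 ≤ yt * (1 - yt) * (a * b * (c - d) ^ 2) := by positivity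
        have t2 : 0 ≤ yt * (1 - yt) * ((c - d) * (b - a) * (c * b + a * d)) := by
          apply mul_nonneg hm0.le
          apply mul_nonneg (mul_nonneg (by linarith) (by linarith))
          positivity
        have hineq : c * d * ((c - d) ^ 2 * (yt * (1 - yt)) +
            ((-1 + 2 * z) * (yt * (1 - yt)) - (1 - 2 * yt) * (c * d)) * (y - yt)) =
            -(yt * (1 - yt) * (a * b * (c - d) ^ 2) +
              yt * (1 - yt) * ((c - d) * (b - a) * (c * b + a * d))) := by
          linear_combination -key2
        have h8 : (c - d) ^ 2 * (yt * (1 - yt)) +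
            ((-1 + 2 * z) * (yt * (1 - yt)) - (1 - 2 * yt) * (c * d)) * (y - yt) ≤ 0 := by
          by_contra hlt
          push_neg at hlt
          have h6 := mul_pos hcd0 hlt
          rw [hineq] at h6
          linarith
        apply le_of_mul_le_mul_right _ hm0
        rw [expand]
        linarith [h8]
    · -- z = 1
      subst hz1'
      rw [GMinus, GMinus', if_pos hcase, gMinus, gMinus',
        show (1 : ℝ) * (1 - 1) * yt * (1 - yt) = 0 by ring,
        show (1 : ℝ) * (1 - 1) / (yt * (1 - yt)) = 0 by ring, Real.sqrt_zero]
      rw [GMinus]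
      split_ifs with h
      · rw [gMinus, show (1 : ℝ) * (1 - 1) * y * (1 - y) = 0 by ring, Real.sqrt_zero]
        nlinarith
      · push_neg at h
        nlinarith
  · -- tangent point in zero region
    rw [GMinus, GMinus', if_neg hcase, if_neg hcase]
    rw [GMinus]
    split_ifs with h
    · rw [hval]; linarith [sq_nonneg (a - b)]
    · simp
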